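/- arXiv:math/0608091 — 2 statements merged into one kernel-verified Lean document; each statement's English description precedes it below -/
import Mathlib

section
/- If a ℤΓ-module M admits a permutation presentation, then H¹(Γ, M) is annihilated by exp(Γ). -/
open CategoryTheory CategoryTheory.Limits groupCohomology

/-- A permutation `ℤΓ`-module: one isomorphic to `ℤ[X]` for some `Γ`-set `X`. -/
def IsPermutationModule {Γ : Type} [Group Γ] (F : Rep ℤ Γ) : Prop :=
  ∃ (X : Type) (_ : MulAction Γ X), Nonempty (F ≅ Rep.ofMulAction ℤ Γ X)

/-- A permutation projective module: a direct summand of a permutation module. -/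
def IsPermutationProjective {Γ : Type} [Group Γ] (M : Rep ℤ Γ) : Prop :=
  ∃ F : Rep ℤ Γ, IsPermutationModule F ∧ ∃ (i : M ⟶ F) (r : F ⟶ M), i ≫ r = 𝟙 M

/-- A coflasque module: `ℤ`-free with vanishing `H¹(Γ', M)` for all subgroups `Γ' ≤ Γ`. -/
def IsCoflasque {Γ : Type} [Group Γ] (M : Rep ℤ Γ) : Prop :=
  (@Module.Free ℤ M.V _ _ M.hV2) ∧
    ∀ Γ' : Subgroup Γ,
      Subsingleton (H1 (Rep.res Γ'.subtype M))

/-- A permutation presentation of `M`: an exact sequence `0 → F → F → M → 0`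
with `F` a permutation module. -/
def HasPermutationPresentation {Γ : Type} [Group Γ] (M : Rep ℤ Γ) : Prop :=
  ∃ (F : Rep ℤ Γ) (_ : IsPermutationModule F) (f : F ⟶ F) (π : F ⟶ M),
    Function.Injective f.hom ∧ Function.Surjective π.hom ∧ Function.Exact f.hom π.hom

/-- `π` is `H⁰`-surjective if it is surjective on `Γ'`-invariants for every subgroup `Γ'`. -/
def IsH0Surjective {Γ : Type} [Group Γ] {M N : Rep ℤ Γ} (π : M ⟶ N) : Prop :=
  ∀ Γ' : Subgroup Γ, ∀ n : N, (∀ γ : Γ', N.ρ ↑γ n = n) →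
    ∃ m : M, (∀ γ : Γ', M.ρ ↑γ m = m) ∧ π.hom m = n

section PermLemmas

section Core
variable {Γ : Type} [Group Γ] {X : Type} [MulAction Γ X]

/-- 1-cocycles valued in a permutation module vanish on stabilizers. -/
lemma lemA {n : ℕ} (hpow : ∀ g : Γ, g ^ n = 1) (hn : n ≠ 0)
    (W : Γ → X →₀ ℤ) (hW : ∀ g h x, W (g * h) x = W h (g⁻¹ • x) + W g x)
    {s : Γ} {y : X} (hs : s • y = y) : W s y = 0 := by
  have h1 : ∀ x, W 1 x = 0 := by
    intro x
    have := hW 1 1 x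
    simp only [one_mul, inv_one, one_smul] at this
    linarith
  have hinv : s⁻¹ • y = y := by rw [inv_smul_eq_iff, hs]
  have hk : ∀ k : ℕ, W (s ^ k) y = (k : ℤ) * W s y := by
    intro k
    induction k with
    | zero => simpa using h1 y
    | succ k ih =>
      have := hW s (s ^ k) y
      rw [← pow_succ', hinv, ih] at this
      rw [this]; push_cast; ring
  have h2 := hk n
  rw [hpow s, h1] at h2
  rcases mul_eq_zero.1 h2.symm with h | h
  · exact absurd (by exact_mod_cast h) hn
  · exact h

end Core

section Core2
variable {Γ : Type} [Group Γ] [Finite Γ] {X : Type} [MulAction Γ X]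

/-- Every 1-cocycle valued in a permutation module is a coboundary (H¹ vanishing). -/
lemma lemB {n : ℕ} (hpow : ∀ g : Γ, g ^ n = 1) (hn : n ≠ 0)
    (q : X → X) (γ : X → Γ) (hq1 : ∀ x, γ x • q x = x) (hq2 : ∀ (g : Γ) (x : X), q (g • x) = q x)
    (W : Γ → X →₀ ℤ) (hW : ∀ g h x, W (g * h) x = W h (g⁻¹ • x) + W g x) :
    ∃ a : X →₀ ℤ, ∀ g x, W g x = a (g⁻¹ • x) - a x := by
  classical
  set a₀ : X → ℤ := fun x => - W (γ x) x with ha₀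
  have hfin : (Function.support a₀).Finite := by
    apply Set.Finite.subset (Set.finite_iUnion (fun g : Γ => (W g).finite_support))
    intro x hx
    refine Set.mem_iUnion.2 ⟨γ x, ?_⟩
    simp only [Finset.coe_sort_coe, Finsupp.fun_support_eq, Finset.mem_coe,
      Finsupp.mem_support_iff]
    intro h
    exact hx (by simp [ha₀, h])
  refine ⟨Finsupp.ofSupportFinite a₀ hfin, fun g x => ?_⟩
  have e1 : (γ x)⁻¹ • x = q x := by rw [inv_smul_eq_iff, hq1]
  have hyy : γ (g⁻¹ • x) • q x = g⁻¹ • x := by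
    have := hq1 (g⁻¹ • x); rwa [hq2] at this
  have hsfix : ((γ x)⁻¹ * g * γ (g⁻¹ • x)) • q x = q x := by
    rw [mul_smul, mul_smul, hyy, smul_inv_smul, e1]
  have hz := lemA hpow hn W hW hsfix
  have e2 := hW (γ x) ((γ x)⁻¹ * g * γ (g⁻¹ • x)) x
  have e3 : γ x * ((γ x)⁻¹ * g * γ (g⁻¹ • x)) = g * γ (g⁻¹ • x) := by group
  rw [e3, e1, hz] at e2
  have e4 := hW g (γ (g⁻¹ • x)) x
  have ecoe : ∀ y, Finsupp.ofSupportFinite a₀ hfin y = a₀ y := fun y => rfl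
  rw [ecoe, ecoe, ha₀]
  simp only
  linarith
end Core2

section Core3
variable {Γ : Type} [Group Γ] [Finite Γ] {X : Type} [MulAction Γ X]

/-- `exp Γ` kills 2-cocycles valued in a permutation module, up to coboundaries. -/
lemma lemD {n : ℕ} (hpow : ∀ g : Γ, g ^ n = 1)
    (q : X → X) (γ : X → Γ) (hq1 : ∀ x, γ x • q x = x) (hq2 : ∀ (g : Γ) (x : X), q (g • x) = q x)
    (b : Γ → Γ → X →₀ ℤ)
    (hb : ∀ g h j : Γ, ∀ x : X,
      b h j (g⁻¹ • x) - b (g * h) j x + b g (h * j) x - b g h x = 0) :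
    ∃ u : Γ → X →₀ ℤ, ∀ g h x,
      (n : ℤ) * b g h x = u h (g⁻¹ • x) - u (g * h) x + u g x := by
  classical
  have := Fintype.ofFinite Γ
  -- the stabilizer as a finset, and sums over it
  set T : X → Finset Γ := fun z => Finset.univ.filter (fun t => t • z = z) with hT
  have hmemT : ∀ z t, t ∈ T z ↔ t • z = z := by
    intro z t; simp [hT]
  have hTcard : ∀ z, ((T z).card : ℤ) ≠ 0 := by
    intro z
    have : (1 : Γ) ∈ T z := (hmemT z 1).2 (one_smul _ _)
    have := Finset.card_pos.2 ⟨1, this⟩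
    exact_mod_cast this.ne'
  set S : X → Γ → ℤ := fun z s => ∑ t ∈ T z, b s t z with hS
  -- cocycle identity restricted to stabilizer, summed
  have hc1 : ∀ z s t, s • z = z → t • z = z →
      S z t - S z (s * t) + S z s = ((T z).card : ℤ) * b s t z := by
    intro z s t hs ht
    have hsummand : ∀ j ∈ T z, b t j z = b (s * t) j z - b s (t * j) z + b s t z := by
      intro j hj
      have h := hb s t j z
      rw [show s⁻¹ • z = z by rw [inv_smul_eq_iff, hs]] at h
      linarith
    have h1 : S z t = S z (s * t) - (∑ j ∈ T z, b s (t * j) z) + ((T z).card : ℤ) * b s t z := by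
      rw [hS]
      simp only
      rw [Finset.sum_congr rfl hsummand]
      rw [Finset.sum_add_distrib, Finset.sum_sub_distrib, Finset.sum_const, nsmul_eq_mul]
    have h2 : (∑ j ∈ T z, b s (t * j) z) = S z s := by
      rw [hS]
      refine Finset.sum_nbij' (fun j => t * j) (fun j => t⁻¹ * j) ?_ ?_ ?_ ?_ ?_
      · intro j hj
        rw [hmemT] at hj ⊢
        rw [mul_smul, hj, ht]
      · intro j hj
        rw [hmemT] at hj ⊢
        rw [mul_smul, hj, inv_smul_eq_iff, ht]
      · intro j _; group
      · intro j _; group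
      · intro j _; rfl
    rw [h2] at h1
    linarith
  have hS1 : ∀ z, S z 1 = ((T z).card : ℤ) * b 1 1 z := by
    intro z
    have : ∀ j ∈ T z, b 1 j z = b 1 1 z := by
      intro j _
      have h := hb 1 1 j z
      simp only [one_mul, inv_one, one_smul] at h
      linarith
    rw [hS]
    simp only
    rw [Finset.sum_congr rfl this, Finset.sum_const, nsmul_eq_mul]
  have hpowfix : ∀ (z : X) (s : Γ) (k : ℕ), s • z = z → s ^ k • z = z := by
    intro z s k hs
    induction k with
    | zero => simp
    | succ k ih => rw [pow_succ, mul_smul, hs, ih]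
  have hc3 : ∀ z s, s • z = z → ((T z).card : ℤ) ∣ (n : ℤ) * S z s := by
    intro z s hs
    have key : ∀ k : ℕ, ((T z).card : ℤ) ∣ S z (s ^ k) - (k : ℤ) * S z s := by
      intro k
      induction k with
      | zero => exact ⟨b 1 1 z, by rw [pow_zero, hS1]; push_cast; ring⟩
      | succ k ih =>
        have h := hc1 z s (s ^ k) hs (hpowfix z s k hs)
        rw [← pow_succ'] at h
        obtain ⟨A, hA⟩ := ih
        exact ⟨A - b s (s ^ k) z, by push_cast; linarith⟩
    have h := key n
    rw [hpow s, hS1] at h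
    obtain ⟨A, hA⟩ := h
    exact ⟨b 1 1 z - A, by linear_combination -hA⟩
  set w2 : X → Γ → ℤ := fun z s => ((n : ℤ) * S z s) / ((T z).card : ℤ) with hw2
  have hw2mul : ∀ z s, s • z = z → ((T z).card : ℤ) * w2 z s = (n : ℤ) * S z s := by
    intro z s hs
    exact Int.mul_ediv_cancel' (hc3 z s hs)
  have hc4 : ∀ z s t, s • z = z → t • z = z →
      w2 z t - w2 z (s * t) + w2 z s = (n : ℤ) * b s t z := by
    intro z s t hs ht
    have hst : (s * t) • z = z := by rw [mul_smul, ht, hs]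
    apply mul_left_cancel₀ (hTcard z)
    have e1 := hw2mul z t ht
    have e2 := hw2mul z (s * t) hst
    have e3 := hw2mul z s hs
    have e4 := hc1 z s t hs ht
    nlinarith [e1, e2, e3, e4]
  -- the explicit witness
  set u₀ : Γ → X → ℤ := fun g x =>
    w2 (q x) ((γ x)⁻¹ * g * γ (g⁻¹ • x))
      - (n : ℤ) * (b (γ x) ((γ x)⁻¹ * g * γ (g⁻¹ • x)) x - b g (γ (g⁻¹ • x)) x) with hu₀
  have hAfin : (⋃ (p : Γ) (r : Γ), ((b p r).support : Set X)).Finite :=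
    Set.finite_iUnion fun p => Set.finite_iUnion fun r => (b p r).support.finite_toSet
  have hufin : ∀ g, (Function.support (u₀ g)).Finite := by
    intro g
    set A : Set X := ⋃ (p : Γ) (r : Γ), ((b p r).support : Set X) with hA
    have hBfin : (⋃ z ∈ A, MulAction.orbit Γ z).Finite :=
      Set.Finite.biUnion hAfin fun z _ => Set.finite_range _
    apply Set.Finite.subset (hAfin.union hBfin)
    intro x hx
    by_contra hxn
    simp only [Set.mem_union, not_or] at hxn
    obtain ⟨hx1, hx2⟩ := hxn
    have hnotA : ∀ p r : Γ, b p r x = 0 := by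
      intro p r
      by_contra hcon
      exact hx1 (Set.mem_iUnion.2 ⟨p, Set.mem_iUnion.2 ⟨r, Finsupp.mem_support_iff.2 hcon⟩⟩)
    have hqx : ∀ p r : Γ, b p r (q x) = 0 := by
      intro p r
      by_contra hcon
      have hqA : q x ∈ A :=
        Set.mem_iUnion.2 ⟨p, Set.mem_iUnion.2 ⟨r, Finsupp.mem_support_iff.2 hcon⟩⟩
      exact hx2 (Set.mem_biUnion hqA ⟨γ x, hq1 x⟩)
    have hw0 : ∀ s, w2 (q x) s = 0 := by
      intro s
      rw [hw2]
      simp only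
      rw [hS]
      simp only
      rw [Finset.sum_congr rfl (fun j _ => hqx s j), Finset.sum_const_zero, mul_zero,
        Int.zero_ediv]
    apply hx
    rw [hu₀]
    simp only
    rw [hw0, hnotA, hnotA, sub_zero, mul_zero, sub_zero]
  refine ⟨fun g => Finsupp.ofSupportFinite (u₀ g) (hufin g), fun g h x => ?_⟩
  have ecoe : ∀ g y, Finsupp.ofSupportFinite (u₀ g) (hufin g) y = u₀ g y := fun _ _ => rfl
  rw [ecoe, ecoe, ecoe]
  -- notation
  have hz1 : q (g⁻¹ • x) = q x := hq2 g⁻¹ x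
  have hz2 : q ((g * h)⁻¹ • x) = q x := hq2 (g * h)⁻¹ x
  set z := q x with hzdef
  set y := g⁻¹ • x with hy
  set s : Γ := (γ x)⁻¹ * g * γ y with hsdef
  set t : Γ := (γ y)⁻¹ * h * γ (h⁻¹ • y) with htdef
  have e1 : (γ x)⁻¹ • x = z := by rw [inv_smul_eq_iff, hq1]
  have e1' : (γ y)⁻¹ • y = z := by
    rw [inv_smul_eq_iff, ← hz1]; exact (hq1 y).symm
  have hγyz : γ y • z = y := by rw [← hz1]; exact hq1 y
  have hγ2 : γ (h⁻¹ • y) • z = h⁻¹ • y := by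
    rw [← hz1, ← hq2 h⁻¹ y]; exact hq1 _
  have hs : s • z = z := by
    rw [hsdef, mul_smul, mul_smul, hγyz, hy, smul_inv_smul, e1]
  have ht : t • z = z := by
    rw [htdef, mul_smul, mul_smul, hγ2, smul_inv_smul, e1']
  have eghx : (g * h)⁻¹ • x = h⁻¹ • y := by rw [hy, mul_inv_rev, mul_smul]
  have est : (γ x)⁻¹ * (g * h) * γ (h⁻¹ • y) = s * t := by rw [hsdef, htdef]; group
  have egs : γ x * s = g * γ y := by rw [hsdef]; group
  have eht : γ y * t = h * γ (h⁻¹ • y) := by rw [htdef]; group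
  have I1 := hb (γ x) s t x
  rw [e1, egs] at I1
  have I2 := hb g (γ y) t x
  rw [← hy, eht] at I2
  have I3 := hb g h (γ (h⁻¹ • y)) x
  rw [← hy] at I3
  have hc4i := hc4 z s t hs ht
  simp only [hu₀]
  rw [← hy, hz1, hzdef] at *
  rw [eghx, est]
  rw [← hsdef, ← htdef]
  linear_combination -hc4i - (n : ℤ) * I1 + (n : ℤ) * I2 - (n : ℤ) * I3
end Core3
end PermLemmas

theorem exponent_smul_h1_of_hasPermutationPresentation (Γ : Type) [Group Γ] [Finite Γ]
    (M : Rep ℤ Γ) (hM : HasPermutationPresentation M) (x : H1 M) :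
    Monoid.exponent Γ • x = 0 := by
  classical
  obtain ⟨F, hFperm, f, π, hfinj, hπsurj, hexact⟩ := hM
  obtain ⟨X, _, ⟨e0⟩⟩ := hFperm
  let ρ0 : Representation ℤ Γ (X →₀ ℤ) :=
    { toFun := fun g => Finsupp.lmapDomain ℤ ℤ (g • ·)
      map_one' := by ext; simp
      map_mul' := fun x y => by ext; simp [mul_smul] }
  have hρ0 : ∀ g, (MonoidAlgebra.coeffLinearEquiv ℤ).toLinearMap ∘ₗ
      Representation.ofMulAction ℤ Γ X g = ρ0 g ∘ₗ (MonoidAlgebra.coeffLinearEquiv ℤ).toLinearMap :=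
    fun g => by rw [Representation.ofMulAction_def]; ext; simp [ρ0]
  let e : F ≅ Rep.of ρ0 := e0 ≪≫ Rep.mkIso (Representation.Equiv.mk _ hρ0)
  set P : Rep ℤ Γ := Rep.of ρ0 with hP
  -- reduce to a statement about cocycles
  refine H1_induction_on x (fun c => ?_)
  rw [show (Monoid.exponent Γ) • H1π M c
      = H1π M (Monoid.exponent Γ • c) from (map_nsmul (H1π M).hom _ _).symm,
    H1π_eq_zero_iff]
  set n : ℕ := Monoid.exponent Γ with hndef
  have hpow : ∀ g : Γ, g ^ n = 1 := Monoid.pow_exponent_eq_one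
  have hnne : n ≠ 0 := Monoid.exponent_ne_zero_of_finite
  have hc : ∀ g h : Γ, (c : Γ → M) (g * h) = M.ρ g ((c : Γ → M) h) + (c : Γ → M) g :=
    (mem_cocycles₁_iff (c : Γ → M)).1 c.2
  -- basic iso plumbing
  have key : ∀ (A B : Rep ℤ Γ) (α : A ⟶ B) (β : B ⟶ A), α ≫ β = 𝟙 A →
      ∀ v : A, β.hom (α.hom v) = v := by
    intro A B α β hαβ v
    have := congrArg (fun (t : A ⟶ A) => t.hom v) hαβ
    simpa using this
  have hie : ∀ w : F, e.inv.hom (e.hom.hom w) = w := key F P e.hom e.inv e.hom_inv_id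
  have hei : ∀ w : P, e.hom.hom (e.inv.hom w) = w := key P F e.inv e.hom e.inv_hom_id
  set ρP : Γ → ((X →₀ ℤ) →ₗ[ℤ] (X →₀ ℤ)) := fun g => ρ0 g
    with hρPdef
  have hρ : ∀ (g : Γ) (w : X →₀ ℤ) (y : X), ρP g w y = w (g⁻¹ • y) :=
    fun g w y => by
      conv_lhs => rw [← smul_inv_smul g y]
      exact Finsupp.mapDomain_apply (MulAction.injective g) w _
  have hρmul : ∀ (g h : Γ) (w : X →₀ ℤ), ρP (g * h) w = ρP g (ρP h w) := by
    intro g h w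
    rw [hρPdef]
    simp only [map_mul]
    rfl
  -- transported maps, hand-bundled to live in the Finsupp world
  set Φ : (X →₀ ℤ) →+ (X →₀ ℤ) :=
    AddMonoidHom.mk' (fun w => e.hom.hom (f.hom (e.inv.hom w))) (fun a b =>
      (congrArg (fun t => e.hom.hom (f.hom t)) (map_add e.inv.hom a b)).trans
        ((congrArg e.hom.hom (map_add f.hom _ _)).trans (map_add e.hom.hom _ _)))
    with hΦdef
  set Ψ : (X →₀ ℤ) →+ M :=
    AddMonoidHom.mk' (fun w => π.hom (e.inv.hom w)) (fun a b =>
      (congrArg π.hom (map_add e.inv.hom a b)).trans (map_add π.hom _ _))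
    with hΨdef
  have hΦsmul : ∀ (r : ℤ) (w : X →₀ ℤ), Φ (r • w) = r • Φ w := fun r w => by
    simpa using map_intCast_smul Φ ℤ ℤ r w
  have hΨsmul : ∀ (r : ℤ) (w : X →₀ ℤ), Ψ (r • w) = r • Ψ w := fun r w => by
    simpa using map_intCast_smul Ψ ℤ ℤ r w
  have hΦcomm : ∀ (g : Γ) (w : X →₀ ℤ), Φ (ρP g w) = ρP g (Φ w) := by
    intro g w
    exact (congrArg (fun t => e.hom.hom (f.hom t)) (Rep.hom_comm_apply e.inv g w)).trans
      ((congrArg e.hom.hom (Rep.hom_comm_apply f g _)).trans (Rep.hom_comm_apply e.hom g _))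
  have hΨcomm : ∀ (g : Γ) (w : X →₀ ℤ), Ψ (ρP g w) = M.ρ g (Ψ w) := by
    intro g w
    exact (congrArg π.hom (Rep.hom_comm_apply e.inv g w)).trans (Rep.hom_comm_apply π g _)
  have hΦinj : Function.Injective Φ := by
    intro a b hab
    have h2 : e.hom.hom (f.hom (e.inv.hom a)) = e.hom.hom (f.hom (e.inv.hom b)) := hab
    have h3 : f.hom (e.inv.hom a) = f.hom (e.inv.hom b) := by
      rw [← hie (f.hom (e.inv.hom a)), ← hie (f.hom (e.inv.hom b)), h2]
    have h4 : e.inv.hom a = e.inv.hom b := hfinj h3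
    calc a = e.hom.hom (e.inv.hom a) := (hei a).symm
    _ = e.hom.hom (e.inv.hom b) := by rw [h4]
    _ = b := hei b
  have hΨΦ : ∀ w, Ψ (Φ w) = 0 := by
    intro w
    show π.hom (e.inv.hom (e.hom.hom (f.hom (e.inv.hom w)))) = 0
    rw [hie]
    exact hexact.apply_apply_eq_zero _
  -- lift of the cocycle
  set C : Γ → (X →₀ ℤ) := fun g => e.hom.hom (Function.surjInv hπsurj ((c : Γ → M) g))
    with hCdef
  have hΨC : ∀ g, Ψ (C g) = (c : Γ → M) g := by
    intro g
    show π.hom (e.inv.hom (e.hom.hom _)) = _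
    rw [hie]
    exact Function.surjInv_eq hπsurj _
  set v : Γ → Γ → (X →₀ ℤ) := fun g h => ρP g (C h) - C (g * h) + C g with hvdef
  have hΨv : ∀ g h, Ψ (v g h) = 0 := by
    intro g h
    rw [hvdef]
    simp only [map_add, map_sub, hΨcomm, hΨC]
    rw [hc g h]
    abel
  -- the 2-cocycle measuring the failure of the lift
  have hker : ∀ w, Ψ w = 0 → ∃ p, Φ p = w := by
    intro w hw
    have hw' : π.hom (e.inv.hom w) = 0 := hw
    obtain ⟨p₀, hp₀⟩ := (hexact (e.inv.hom w)).1 hw'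
    refine ⟨e.hom.hom p₀, ?_⟩
    show e.hom.hom (f.hom (e.inv.hom (e.hom.hom p₀))) = w
    rw [hie, hp₀, hei]
  set b : Γ → Γ → (X →₀ ℤ) := fun g h => Classical.choose (hker (v g h) (hΨv g h)) with hbdef
  have hΦb : ∀ g h, Φ (b g h) = v g h := fun g h => Classical.choose_spec (hker (v g h) (hΨv g h))
  have hbcoc : ∀ g h j : Γ, ρP g (b h j) - b (g * h) j + b g (h * j) - b g h = 0 := by
    intro g h j
    apply hΦinj
    rw [map_zero, map_sub, map_add, map_sub, hΦcomm, hΦb, hΦb, hΦb, hΦb, hvdef]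
    simp only [map_add, map_sub, hρmul, mul_assoc]
    abel
  have hb' : ∀ g h j : Γ, ∀ y : X,
      b h j (g⁻¹ • y) - b (g * h) j y + b g (h * j) y - b g h y = 0 := by
    intro g h j y
    have h0 := DFunLike.congr_fun (hbcoc g h j) y
    simpa only [Finsupp.coe_sub, Finsupp.coe_add, Pi.sub_apply, Pi.add_apply,
      Finsupp.coe_zero, Pi.zero_apply, hρ] using h0
  -- orbit representatives
  have hγex : ∀ y : X, ∃ g : Γ,
      g • (Quotient.mk (MulAction.orbitRel Γ X) y).out = y := by
    intro y
    obtain ⟨g, hg⟩ := Quotient.mk_out (s := MulAction.orbitRel Γ X) y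
    exact ⟨g⁻¹, by rw [← hg]; exact inv_smul_smul g y⟩
  set q : X → X := fun y => (Quotient.mk (MulAction.orbitRel Γ X) y).out with hqdef
  set γ : X → Γ := fun y => Classical.choose (hγex y) with hγdef
  have hq1 : ∀ y, γ y • q y = y := fun y => Classical.choose_spec (hγex y)
  have hq2 : ∀ (g : Γ) (y : X), q (g • y) = q y := by
    intro g y
    apply congrArg Quotient.out
    apply Quotient.sound
    exact ⟨g, rfl⟩
  -- kill n·b up to an explicit coboundary
  obtain ⟨u, hu⟩ := lemD hpow q γ hq1 hq2 b hb'
  have hufin : ∀ g h : Γ, (n : ℤ) • b g h = ρP g (u h) - u (g * h) + u g := by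
    intro g h
    ext y
    rw [Finsupp.smul_apply, smul_eq_mul, hu g h y]
    simp only [Finsupp.coe_sub, Finsupp.coe_add, Pi.sub_apply, Pi.add_apply, hρ]
  -- the corrected 1-cocycle with values in the permutation module
  set W : Γ → (X →₀ ℤ) := fun g => (n : ℤ) • C g - Φ (u g) with hWdef
  have hW : ∀ g h y, W (g * h) y = W h (g⁻¹ • y) + W g y := by
    intro g h y
    have h3' : Φ ((n : ℤ) • b g h) = Φ (ρP g (u h) - u (g * h) + u g) := congrArg Φ (hufin g h)
    rw [hΦsmul, map_add, map_sub] at h3'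
    have h3 := DFunLike.congr_fun h3' y
    simp only [Finsupp.smul_apply, smul_eq_mul,
      Finsupp.coe_sub, Finsupp.coe_add, Pi.sub_apply, Pi.add_apply, hΦb] at h3
    have h4 : (v g h) y = C h (g⁻¹ • y) - C (g * h) y + C g y := by
      rw [hvdef]
      simp only [Finsupp.coe_sub, Finsupp.coe_add, Pi.sub_apply, Pi.add_apply, hρ]
    have h5 : (Φ (u h)) (g⁻¹ • y) = (Φ (ρP g (u h))) y := by
      rw [hΦcomm, hρ]
    simp only [hWdef, Finsupp.coe_sub, Pi.sub_apply, Finsupp.smul_apply, smul_eq_mul]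
    rw [h5]
    rw [h4] at h3
    linarith [h3]
  obtain ⟨a, ha⟩ := lemB hpow hnne q γ hq1 hq2 W hW
  -- conclusion
  change ∃ y, (d₀₁ M).hom y = _
  refine ⟨Ψ a, funext fun g => ?_⟩
  rw [d₀₁_hom_apply]
  have h6 : ρP g a - a = W g := by
    ext y
    simp only [Finsupp.coe_sub, Pi.sub_apply, hρ]
    exact (ha g y).symm
  have h7 : M.ρ g (Ψ a) - Ψ a = Ψ (W g) := by
    rw [← hΨcomm, ← map_sub, h6]
  have h8 : ((Monoid.exponent Γ • c : cocycles₁ M) : Γ → M) g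
      = (n : ℤ) • ((c : Γ → M) g) := by
    rw [Nat.cast_smul_eq_nsmul]
    rfl
  rw [h8, h7, hWdef]
  simp only
  rw [map_sub, hΨsmul, hΨC, hΨΦ, sub_zero]
end

section
/- A ℤΓ-module M is permutation projective if and only if M is permutation projective as a ℤΓ'-module for every Sylow subgroup Γ' of Γ. -/
open CategoryTheory CategoryTheory.Limits groupCohomology

attribute [local instance high] Rep.hV2

noncomputable section Aux

variable {Γ : Type} [Group Γ]

/-- Bezout for `Finset.gcd` over `ℕ`, with integer coefficients. -/
lemma bezout_finset (S : Finset ℕ) (g : ℕ → ℕ) :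
    ∃ c : ℕ → ℤ, ∑ p ∈ S, c p * g p = ((S.gcd g : ℕ) : ℤ) := by
  classical
  induction S using Finset.induction_on with
  | empty => exact ⟨fun _ => 0, by simp⟩
  | insert a s ha ih =>
    obtain ⟨c, hc⟩ := ih
    refine ⟨fun p => if p = a then Nat.gcdA (g a) (s.gcd g)
      else Nat.gcdB (g a) (s.gcd g) * c p, ?_⟩
    rw [Finset.sum_insert ha, Finset.gcd_insert]
    beta_reduce
    rw [if_pos rfl]
    have hs : ∑ p ∈ s, (if p = a then Nat.gcdA (g a) (s.gcd g)
        else Nat.gcdB (g a) (s.gcd g) * c p) * (g p : ℤ)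
        = Nat.gcdB (g a) (s.gcd g) * ∑ p ∈ s, c p * g p := by
      rw [Finset.mul_sum]
      refine Finset.sum_congr rfl fun p hp => ?_
      rw [if_neg (by rintro rfl; exact ha hp), mul_assoc]
    rw [hs, hc]
    show _ = ((Nat.gcd (g a) (s.gcd g) : ℕ) : ℤ)
    rw [Nat.gcd_eq_gcd_ab (g a) (s.gcd g)]
    ring

/-- Pointwise extensionality for `ModuleCat` morphisms. -/
lemma modcat_hom_ext {A B : Type} [AddCommGroup A] [AddCommGroup B] [Module ℤ A] [Module ℤ B]
    {φ ψ : A →ₗ[ℤ] B} (h : ∀ a, φ a = ψ a) : φ = ψ :=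
  LinearMap.ext h

/-- A `ModuleCat` morphism as an `AddMonoidHom`. -/
def homToAdd {A B : Type} [AddCommGroup A] [AddCommGroup B] [Module ℤ A] [Module ℤ B]
    (φ : A →ₗ[ℤ] B) : A →+ B :=
  φ.toAddMonoidHom

/-- Morphisms commute with finite sums. -/
lemma hom_map_sum {A B : Type} [AddCommGroup A] [AddCommGroup B] [Module ℤ A] [Module ℤ B]
    (φ : A →ₗ[ℤ] B) {ι : Type} (x : ι → A) (s : Finset ι) :
    φ (∑ i ∈ s, x i) = ∑ i ∈ s, φ (x i) :=
  map_sum (homToAdd φ) x s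

/-- Morphisms commute with natural scalar multiples. -/
lemma hom_map_nsmul {A B : Type} [AddCommGroup A] [AddCommGroup B] [Module ℤ A] [Module ℤ B]
    (φ : A →ₗ[ℤ] B) (n : ℕ) (v : A) :
    φ (n • v) = n • φ v :=
  map_nsmul (homToAdd φ) n v

/-- Applying a finite sum of morphisms pointwise. -/
lemma hom_sum_apply {A B : Type} [AddCommGroup A] [AddCommGroup B] [Module ℤ A] [Module ℤ B]
    {ι : Type} (s : Finset ι) (t : ι → (A →ₗ[ℤ] B)) (a : A) :
    (∑ i ∈ s, t i) a = ∑ i ∈ s, t i a :=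
  LinearMap.sum_apply s t a

/-- Extensionality for `ModuleCat` morphisms out of a finsupp module. -/
lemma modcat_lhom_ext {G' α : Type} [Group G'] [MulAction G' α] {B : Type} [AddCommGroup B]
    [Module ℤ B] (φ ψ : (Rep.ofMulAction ℤ G' α).V →ₗ[ℤ] B)
    (h : ∀ (a : α) (b : ℤ), φ (MonoidAlgebra.single a b) = ψ (MonoidAlgebra.single a b)) :
    φ = ψ :=
  MonoidAlgebra.lhom_ext' fun a => LinearMap.ext fun b => h a b

/-- Extensionality on basis vectors `single a 1` suffices. -/
lemma modcat_lhom_ext1 {G' α : Type} [Group G'] [MulAction G' α] {B : Type} [AddCommGroup B]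
    [Module ℤ B] (φ ψ : (Rep.ofMulAction ℤ G' α).V →ₗ[ℤ] B)
    (h : ∀ (a : α), φ (MonoidAlgebra.single a 1) = ψ (MonoidAlgebra.single a 1)) : φ = ψ := by
  refine modcat_lhom_ext _ _ fun a b => ?_
  have h2 : (homToAdd φ).comp (MonoidAlgebra.singleAddHom a)
      = (homToAdd ψ).comp (MonoidAlgebra.singleAddHom a) :=
    AddMonoidHom.ext_int (h a)
  exact congrArg (fun g => g b) h2

/-- The `Γ`-action on `M` coming from the representation. -/
def repMulAction (M : Rep.{0} ℤ Γ) : MulAction Γ M where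
  smul γ m := M.ρ γ m
  one_smul m := by show M.ρ 1 m = m; simp
  mul_smul x y m := by show M.ρ (x*y) m = M.ρ x (M.ρ y m); rw [map_mul]; rfl

/-- The permutation module on the underlying `Γ`-set of `M`. -/
def permEnv (M : Rep.{0} ℤ Γ) : Rep ℤ Γ := @Rep.ofMulAction ℤ Γ _ _ M (repMulAction M)

/-- The canonical map `ℤ[M] → M`, `[m] ↦ m`. -/
def epsL (M : Rep.{0} ℤ Γ) : (permEnv M).V →ₗ[ℤ] M.V :=
  Finsupp.linearCombination ℤ (_root_.id : M.V → M.V) ∘ₗ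
    (MonoidAlgebra.coeffLinearEquiv ℤ).toLinearMap

/-- The `ℤ`-scalar action on `M`, expressed via `epsL` to avoid instance diamonds. -/
def msmul (M : Rep.{0} ℤ Γ) (b : ℤ) (a : M) : (M : Type) := epsL M (MonoidAlgebra.single a b)

/-- The `MulAction` of `ℤ` on the carrier of `M` coming from the module structure. -/
def mact (M : Rep.{0} ℤ Γ) : MulAction ℤ (M : Type) :=
  M.hV2.toDistribMulAction.toMulAction

lemma msmul_def (M : Rep.{0} ℤ Γ) (b : ℤ) (a : M) :
    msmul M b a = @HSMul.hSMul ℤ (M : Type) (M : Type)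
      (@instHSMul ℤ (M : Type) (mact M).toSMul) b a := by
  show epsL M (MonoidAlgebra.single a b) = _
  have h1 := Finsupp.linearCombination_single ℤ (v := (_root_.id : M.V → M.V)) b a
  exact h1

lemma msmul_one (M : Rep.{0} ℤ Γ) (a : M) : msmul M 1 a = a := by
  rw [msmul_def]
  exact @one_smul ℤ (M : Type) _ (mact M) a

lemma msmul_msmul (M : Rep.{0} ℤ Γ) (c d : ℤ) (a : M) :
    msmul M c (msmul M d a) = msmul M (c * d) a := by
  rw [msmul_def, msmul_def, msmul_def]
  exact (@mul_smul ℤ M.V _ (mact M).toSemigroupAction c d a).symm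

lemma msmul_sum (M : Rep.{0} ℤ Γ) {ι : Type} (s : Finset ι) (x : ι → ℤ) (a : M) :
    msmul M (∑ i ∈ s, x i) a = ∑ i ∈ s, msmul M (x i) a := by
  show epsL M (MonoidAlgebra.single a (∑ i ∈ s, x i)) = _
  rw [show MonoidAlgebra.single a (∑ i ∈ s, x i) = ∑ i ∈ s, MonoidAlgebra.single a (x i) from
    map_sum (MonoidAlgebra.singleAddHom a) x s]
  exact hom_map_sum (epsL M) _ s

lemma msmul_natCast (M : Rep.{0} ℤ Γ) (n : ℕ) (a : M) :
    msmul M (n : ℤ) a = n • a := by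
  show epsL M (MonoidAlgebra.single a ((n : ℕ) : ℤ)) = _
  have h2 := map_nsmul (MonoidAlgebra.singleAddHom a) n (1 : ℤ)
  simp only [MonoidAlgebra.singleAddHom_apply, nsmul_eq_mul, mul_one] at h2
  have e5 : epsL M (n • MonoidAlgebra.single a (1 : ℤ)) = n • epsL M (MonoidAlgebra.single a (1 : ℤ)) :=
    hom_map_nsmul (epsL M) n _
  rw [h2, e5, show epsL M (MonoidAlgebra.single a (1 : ℤ)) = a from msmul_one M a]

lemma permEnv_single (M : Rep.{0} ℤ Γ) (γ : Γ) (a : M) (b : ℤ) :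
    (permEnv M).ρ γ (MonoidAlgebra.single a b) = MonoidAlgebra.single (M.ρ γ a) b :=
  @Representation.ofMulAction_single ℤ _ Γ _ M.V (repMulAction M) γ a b

lemma eps_comm_hom (M : Rep.{0} ℤ Γ) (γ : Γ) :
    epsL M ∘ₗ (permEnv M).ρ γ
      = M.ρ γ ∘ₗ epsL M := by
  refine @modcat_lhom_ext1 Γ M.V _ (repMulAction M) M.V _ _ _ _ fun a => ?_
  show epsL M ((permEnv M).ρ γ (MonoidAlgebra.single a 1)) = M.ρ γ (epsL M (MonoidAlgebra.single a 1))
  rw [permEnv_single]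
  rw [show epsL M (MonoidAlgebra.single (M.ρ γ a) (1:ℤ)) = M.ρ γ a from msmul_one M _]
  rw [show epsL M (MonoidAlgebra.single a (1:ℤ)) = a from msmul_one M _]

lemma eps_comm (M : Rep.{0} ℤ Γ) (γ : Γ) (v : (permEnv M).V) :
    epsL M ((permEnv M).ρ γ v) = M.ρ γ (epsL M v) :=
  congrArg (fun g => g v) (eps_comm_hom M γ)

/-- The canonical map as a morphism of representations. -/
def epsHom (M : Rep.{0} ℤ Γ) : permEnv M ⟶ M :=
  ConcreteCategory.ofHom (C := Rep ℤ Γ)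
    (⟨epsL M, fun g => eps_comm_hom M g⟩ : (permEnv M).ρ.IntertwiningMap M.ρ)

/-- Scalar multiplication on the permutation module, as a `ModuleCat` morphism. -/
def pscale (M : Rep.{0} ℤ Γ) (c : ℤ) : (permEnv M).V →ₗ[ℤ] (permEnv M).V :=
  LinearMap.lsmul ℤ ((permEnv M).V) c

lemma pscale_single (M : Rep.{0} ℤ Γ) (c : ℤ) (a : M) (b : ℤ) :
    pscale M c (MonoidAlgebra.single a b) = MonoidAlgebra.single a (c * b) := by
  show c • MonoidAlgebra.single a b = _
  exact MonoidAlgebra.smul_single' c a b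

/-- Scalar multiplication on `M`, as a `ModuleCat` morphism. -/
def mscale (M : Rep.{0} ℤ Γ) (c : ℤ) : M.V →ₗ[ℤ] M.V :=
  LinearMap.lsmul ℤ M.V c

lemma msmul_mscale (M : Rep.{0} ℤ Γ) (c : ℤ) (a : M) : msmul M c a = mscale M c a := by
  rw [msmul_def]
  exact (LinearMap.lsmul_apply c a).symm

lemma eps_pscale_hom (M : Rep.{0} ℤ Γ) (c : ℤ) :
    epsL M ∘ₗ pscale M c = mscale M c ∘ₗ epsL M := by
  refine @modcat_lhom_ext1 Γ M.V _ (repMulAction M) M.V _ _ _ _ fun a => ?_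
  show epsL M (pscale M c (MonoidAlgebra.single a 1)) = mscale M c (epsL M (MonoidAlgebra.single a 1))
  rw [pscale_single, mul_one,
    show epsL M (MonoidAlgebra.single a (1:ℤ)) = a from msmul_one M _]
  exact msmul_mscale M c a

lemma eps_pscale (M : Rep.{0} ℤ Γ) (c : ℤ) (v : (permEnv M).V) :
    epsL M (pscale M c v) = msmul M c (epsL M v) := by
  have h1 := congrArg (fun g => g v) (eps_pscale_hom M c)
  rw [show epsL M (pscale M c v) = mscale M c (epsL M v) from h1]
  exact (msmul_mscale M c _).symm

lemma pscale_comm (M : Rep.{0} ℤ Γ) (γ : Γ) (c : ℤ) (v : (permEnv M).V) :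
    (permEnv M).ρ γ (pscale M c v) = pscale M c ((permEnv M).ρ γ v) := by
  have key : (permEnv M).ρ γ ∘ₗ pscale M c
      = pscale M c ∘ₗ (permEnv M).ρ γ := by
    refine @modcat_lhom_ext Γ M.V _ (repMulAction M) (permEnv M).V _ _ _ _ fun a b => ?_
    show (permEnv M).ρ γ (pscale M c (MonoidAlgebra.single a b))
      = pscale M c ((permEnv M).ρ γ (MonoidAlgebra.single a b))
    rw [pscale_single, permEnv_single, permEnv_single, pscale_single]
  exact congrArg (fun g => g v) key

/-- A section over a subgroup `H`, from permutation projectivity of the restriction. -/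
lemma exists_section (M : Rep.{0} ℤ Γ) (H : Subgroup Γ)
    (hpp : IsPermutationProjective
      (Rep.res H.subtype M)) :
    ∃ f : M.V →ₗ[ℤ] (permEnv M).V,
      (∀ (h : H) (m : M), (permEnv M).ρ (↑h) (f m) = f (M.ρ (↑h) m)) ∧
      ∀ m : M, epsL M (f m) = m := by
  obtain ⟨F, ⟨X, xact, ⟨e⟩⟩, i, r, hir⟩ := hpp
  let φ : X → (M : Type) := fun x => (e.inv ≫ r).hom (MonoidAlgebra.single x 1)
  have hφ : ∀ (h : H) (x : X), φ (h • x) = M.ρ (↑h) (φ x) := by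
    intro h x
    have h2 := Rep.hom_comm_apply (e.inv ≫ r) h (MonoidAlgebra.single x (1 : ℤ))
    rw [show ((Rep.ofMulAction ℤ H X).ρ h (MonoidAlgebra.single x (1:ℤ)))
        = MonoidAlgebra.single (h • x) 1 from Representation.ofMulAction_single h x 1] at h2
    exact h2
  let ℓ : (Rep.ofMulAction ℤ H X).V →ₗ[ℤ] (permEnv M).V := MonoidAlgebra.mapDomainLinearMap ℤ ℤ φ
  refine ⟨ℓ ∘ₗ (i ≫ e.hom).hom.toLinearMap, ?_, ?_⟩
  · intro h m
    have h1 : (i ≫ e.hom).hom (M.ρ (↑h) m) = (Rep.ofMulAction ℤ H X).ρ h ((i ≫ e.hom).hom m) :=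
      Rep.hom_comm_apply (i ≫ e.hom) h m
    show (permEnv M).ρ (↑h) (ℓ ((i ≫ e.hom).hom m)) = ℓ ((i ≫ e.hom).hom (M.ρ (↑h) m))
    rw [h1]
    have key : ℓ ∘ₗ (Rep.ofMulAction ℤ H X).ρ h
        = (permEnv M).ρ (↑h) ∘ₗ ℓ := by
      refine modcat_lhom_ext _ _ fun x b => ?_
      show ℓ ((Rep.ofMulAction ℤ H X).ρ h (MonoidAlgebra.single x b))
        = (permEnv M).ρ (↑h) (ℓ (MonoidAlgebra.single x b))
      rw [show ((Rep.ofMulAction ℤ H X).ρ h (MonoidAlgebra.single x b))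
          = MonoidAlgebra.single (h • x) b from Representation.ofMulAction_single h x b]
      show MonoidAlgebra.mapDomainLinearMap ℤ ℤ φ _
        = (permEnv M).ρ (↑h) (MonoidAlgebra.mapDomainLinearMap ℤ ℤ φ _)
      rw [MonoidAlgebra.mapDomainLinearMap_single, MonoidAlgebra.mapDomainLinearMap_single,
        permEnv_single, hφ]
    exact (congrArg (fun g => g ((i ≫ e.hom).hom m)) key).symm
  · intro m
    have key : epsL M ∘ₗ ℓ = (e.inv ≫ r).hom.toLinearMap := by
      refine modcat_lhom_ext1 _ _ fun x => ?_
      show epsL M (ℓ (MonoidAlgebra.single x 1)) = (e.inv ≫ r).hom (MonoidAlgebra.single x 1)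
      show epsL M (MonoidAlgebra.mapDomainLinearMap ℤ ℤ φ (MonoidAlgebra.single x 1)) = _
      rw [MonoidAlgebra.mapDomainLinearMap_single]
      exact msmul_one M (φ x)
    show epsL M (ℓ ((i ≫ e.hom).hom m)) = m
    have h3 := congrArg (fun g => g ((i ≫ e.hom).hom m)) key
    simp only at h3
    rw [show epsL M (ℓ ((i ≫ e.hom).hom m)) = (e.inv ≫ r).hom ((i ≫ e.hom).hom m) from h3]
    have h4 : (i ≫ e.hom) ≫ (e.inv ≫ r)
        = 𝟙 (Rep.res H.subtype M) := by
      rw [Category.assoc, Iso.hom_inv_id_assoc, hir]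
    calc (e.inv ≫ r).hom ((i ≫ e.hom).hom m)
        = ((i ≫ e.hom) ≫ (e.inv ≫ r)).hom m := rfl
      _ = m := by rw [h4]; rfl

set_option maxHeartbeats 1000000 in
/-- The transfer of a section over a subgroup. -/
lemma exists_transfer [Finite Γ] (M : Rep.{0} ℤ Γ) (H : Subgroup Γ)
    (f : M.V →ₗ[ℤ] (permEnv M).V)
    (hf : ∀ (h : H) (m : M), (permEnv M).ρ (↑h) (f m) = f (M.ρ (↑h) m))
    (hs : ∀ m : M, epsL M (f m) = m) :
    ∃ T : M.V →ₗ[ℤ] (permEnv M).V,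
      (∀ (γ : Γ) (m : M), (permEnv M).ρ γ (T m) = T (M.ρ γ m)) ∧
      ∀ m : M, epsL M (T m) = msmul M (H.index : ℤ) m := by
  classical
  haveI : Fintype (Γ ⧸ H) := Fintype.ofFinite _
  let term : Γ → (M.V →ₗ[ℤ] (permEnv M).V) := fun g =>
    (permEnv M).ρ g ∘ₗ f ∘ₗ M.ρ g⁻¹
  have term_apply : ∀ (g : Γ) (m : M), term g m = (permEnv M).ρ g (f (M.ρ g⁻¹ m)) :=
    fun g m => rfl
  have hterm : ∀ (a b : Γ), (a : Γ ⧸ H) = (b : Γ ⧸ H) → term a = term b := by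
    intro a b hab
    have hmem : a⁻¹ * b ∈ H := (QuotientGroup.eq).mp hab
    have hb : a * (a⁻¹ * b) = b := by group
    have key : term (a * (a⁻¹ * b)) = term a := by
      refine modcat_hom_ext fun m => ?_
      rw [term_apply, term_apply]
      have h1 : M.ρ (a * (a⁻¹ * b))⁻¹ m = M.ρ (a⁻¹*b)⁻¹ (M.ρ a⁻¹ m) := by
        rw [mul_inv_rev, map_mul]; rfl
      have h2 : ∀ v : (permEnv M).V, (permEnv M).ρ (a * (a⁻¹ * b)) v
          = (permEnv M).ρ a ((permEnv M).ρ (a⁻¹*b) v) := by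
        intro v; rw [map_mul]; rfl
      rw [h1, h2]
      refine congrArg (fun z => (permEnv M).ρ a z) ?_
      rw [hf ⟨a⁻¹*b, hmem⟩ (M.ρ (a⁻¹*b)⁻¹ (M.ρ a⁻¹ m))]
      exact congrArg (fun z => f z) (Representation.self_inv_apply M.ρ (a⁻¹*b) (M.ρ a⁻¹ m))
    rw [hb] at key
    exact key.symm
  let T : M.V →ₗ[ℤ] (permEnv M).V := ∑ q : Γ ⧸ H, term (Quotient.out q)
  have T_apply : ∀ m : M, T m = ∑ q : Γ ⧸ H, term (Quotient.out q) m :=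
    fun m => hom_sum_apply Finset.univ _ m
  refine ⟨T, ?_, ?_⟩
  · intro γ m
    have key : ∀ q : Γ ⧸ H, term (γ * Quotient.out q) = term (Quotient.out ((γ • q : Γ ⧸ H))) := by
      intro q
      apply hterm
      show ((γ * Quotient.out q : Γ) : Γ ⧸ H) = _
      rw [QuotientGroup.out_eq']
      show γ • ((Quotient.out q : Γ) : Γ ⧸ H) = γ • q
      rw [QuotientGroup.out_eq']
    have key2 : ∀ (g : Γ), term (γ * g) (M.ρ γ m) = (permEnv M).ρ γ (term g m) := by
      intro g
      rw [term_apply, term_apply]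
      have h1 : M.ρ (γ * g)⁻¹ (M.ρ γ m) = M.ρ g⁻¹ m := by
        rw [mul_inv_rev, map_mul]
        show M.ρ g⁻¹ (M.ρ γ⁻¹ (M.ρ γ m)) = _
        rw [Representation.inv_self_apply]
      have h2 : ∀ v : (permEnv M).V, (permEnv M).ρ (γ * g) v
          = (permEnv M).ρ γ ((permEnv M).ρ g v) := by
        intro v; rw [map_mul]; rfl
      rw [h1, h2]
    have e4 : (permEnv M).ρ γ (T m) = ∑ q : Γ ⧸ H, (permEnv M).ρ γ (term (Quotient.out q) m) := by
      rw [T_apply]; exact hom_map_sum _ _ _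
    rw [e4, T_apply]
    symm
    calc ∑ q : Γ ⧸ H, term (Quotient.out q) (M.ρ γ m)
        = ∑ q : Γ ⧸ H, term (Quotient.out ((γ • q : Γ ⧸ H))) (M.ρ γ m) :=
          (Fintype.sum_equiv (MulAction.toPerm γ)
            (fun q => term (Quotient.out ((γ • q : Γ ⧸ H))) (M.ρ γ m))
            (fun q => term (Quotient.out q) (M.ρ γ m)) (fun q => rfl)).symm
      _ = ∑ q : Γ ⧸ H, term (γ * Quotient.out q) (M.ρ γ m) := by
          refine Finset.sum_congr rfl fun q _ => ?_
          rw [key q]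
      _ = ∑ q : Γ ⧸ H, (permEnv M).ρ γ (term (Quotient.out q) m) := by
          refine Finset.sum_congr rfl fun q _ => key2 _
  · intro m
    have hterm_eps : ∀ g : Γ, epsL M (term g m) = m := by
      intro g
      rw [term_apply, eps_comm, hs, Representation.self_inv_apply]
    have e3 : epsL M (T m) = ∑ q : Γ ⧸ H, epsL M (term (Quotient.out q) m) := by
      rw [T_apply]; exact hom_map_sum _ _ _
    have e6 : ∑ q : Γ ⧸ H, epsL M (term (Quotient.out q) m) = ∑ _q : Γ ⧸ H, m :=
      Finset.sum_congr rfl (fun q _ => hterm_eps (Quotient.out q))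
    have hcard : Fintype.card (Γ ⧸ H) = H.index := by
      rw [← Nat.card_eq_fintype_card]; rfl
    rw [e3, e6, Finset.sum_const, Finset.card_univ, msmul_natCast, hcard]

/-- Chosen Sylow subgroup for each prime. -/
def sylowOf [Finite Γ] (p : ℕ) (hp : p.Prime) : Sylow p Γ :=
  haveI := Fact.mk hp
  Classical.choice inferInstance

end Aux

set_option maxHeartbeats 1000000 in
theorem isPermutationProjective_iff_sylow (Γ : Type) [Group Γ] [Finite Γ]
    (M : Rep ℤ Γ) :
    IsPermutationProjective M ↔
      ∀ (p : ℕ), p.Prime → ∀ P : Sylow p Γ,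
        IsPermutationProjective
          (Rep.res (P : Subgroup Γ).subtype M) := by
  constructor
  · rintro ⟨F, ⟨X, xact, ⟨e⟩⟩, i, r, hir⟩ p hp P
    set res := Rep.resFunctor (k := ℤ) (P : Subgroup Γ).subtype with hres
    refine ⟨res.obj F, ⟨X, inferInstance,
      ⟨res.mapIso e ≪≫ ?_⟩⟩,
      res.map i, res.map r, ?_⟩
    · exact Iso.refl _
    · rw [← res.map_comp, hir, res.map_id]
  · intro hsyl
    classical
    haveI : Fintype Γ := Fintype.ofFinite Γ
    have hT : ∀ (p : ℕ) (hp : p.Prime),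
        ∃ T : M.V →ₗ[ℤ] (permEnv M).V,
          (∀ (γ : Γ) (m : M), (permEnv M).ρ γ (T m) = T (M.ρ γ m)) ∧
          ∀ m : M, epsL M (T m) = msmul M (((((sylowOf p hp : Sylow p Γ) : Subgroup Γ)).index : ℕ) : ℤ) m := by
      intro p hp
      obtain ⟨f, hf, hs⟩ := exists_section M ((sylowOf p hp : Sylow p Γ) : Subgroup Γ)
        (hsyl p hp (sylowOf p hp))
      exact exists_transfer M _ f hf hs
    let Tf : ℕ → (M.V →ₗ[ℤ] (permEnv M).V) := fun p =>
      if hp : p.Prime then (hT p hp).choose else 0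
    let ind : ℕ → ℕ := fun p =>
      if hp : p.Prime then (((sylowOf p hp : Sylow p Γ) : Subgroup Γ)).index else 1
    have hTf : ∀ (p : ℕ), p.Prime →
        (∀ (γ : Γ) (m : M), (permEnv M).ρ γ (Tf p m) = Tf p (M.ρ γ m)) ∧
        ∀ m : M, epsL M (Tf p m) = msmul M ((ind p : ℕ) : ℤ) m := by
      intro p hp
      have h1 : Tf p = (hT p hp).choose := dif_pos hp
      have h2 : ind p = (((sylowOf p hp : Sylow p Γ) : Subgroup Γ)).index := dif_pos hp
      rw [h1, h2]
      exact (hT p hp).choose_spec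
    set S : Finset ℕ := insert 2 (Nat.card Γ).primeFactors with hS
    have hSprime : ∀ p ∈ S, p.Prime := by
      intro p hp
      rcases Finset.mem_insert.mp hp with h | h
      · rw [h]; exact Nat.prime_two
      · exact Nat.prime_of_mem_primeFactors h
    have hgcd : S.gcd ind = 1 := by
      by_contra hne
      obtain ⟨q, hq, hqd⟩ := Nat.exists_prime_and_dvd hne
      have h2S : (2 : ℕ) ∈ S := Finset.mem_insert_self _ _
      have hd2 : S.gcd ind ∣ ind 2 := Finset.gcd_dvd h2S
      have hind2 : ind 2 ∣ Nat.card Γ := by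
        have h5 : ind 2 = (((sylowOf 2 Nat.prime_two : Sylow 2 Γ) : Subgroup Γ)).index := dif_pos Nat.prime_two
        rw [h5]
        exact Subgroup.index_dvd_card _
      have hqcard : q ∣ Nat.card Γ := dvd_trans (dvd_trans hqd hd2) hind2
      have hcard0 : Nat.card Γ ≠ 0 := Nat.card_pos.ne'
      have hqS : q ∈ S := Finset.mem_insert_of_mem
        (Nat.mem_primeFactors.mpr ⟨hq, hqcard, hcard0⟩)
      have hqind : q ∣ ind q := dvd_trans hqd (Finset.gcd_dvd hqS)
      haveI := Fact.mk hq
      have hindq : ind q = (((sylowOf q hq : Sylow q Γ) : Subgroup Γ) : Subgroup Γ).index := dif_pos hq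
      rw [hindq] at hqind
      have hqP : q ∣ Nat.card (((sylowOf q hq : Sylow q Γ) : Subgroup Γ) : Subgroup Γ) := by
        rw [Sylow.card_eq_multiplicity]
        refine dvd_pow_self q ?_
        exact (Nat.Prime.factorization_pos_of_dvd hq hcard0 hqcard).ne'
      have hco : (Nat.card (((sylowOf q hq : Sylow q Γ) : Subgroup Γ) : Subgroup Γ)).Coprime
          (((sylowOf q hq : Sylow q Γ) : Subgroup Γ) : Subgroup Γ).index :=
        Sylow.card_coprime_index (sylowOf q hq)
      have hq1 : q ∣ 1 := hco ▸ Nat.dvd_gcd hqP hqind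
      exact hq.one_lt.ne' (Nat.dvd_one.mp hq1)
    obtain ⟨c, hc⟩ := bezout_finset S ind
    rw [hgcd] at hc
    norm_num at hc
    let fl : M.V →ₗ[ℤ] (permEnv M).V := ∑ p ∈ S, pscale M (c p) ∘ₗ Tf p
    have fl_apply : ∀ m : M, fl m = ∑ p ∈ S, pscale M (c p) (Tf p m) :=
      fun m => hom_sum_apply S _ m
    have fl_comm : ∀ (γ : Γ) (m : M), (permEnv M).ρ γ (fl m) = fl (M.ρ γ m) := by
      intro γ m
      rw [fl_apply, fl_apply]
      have e1 : (permEnv M).ρ γ (∑ p ∈ S, pscale M (c p) (Tf p m))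
          = ∑ p ∈ S, (permEnv M).ρ γ (pscale M (c p) (Tf p m)) := hom_map_sum _ _ _
      rw [e1]
      refine Finset.sum_congr rfl fun p hp => ?_
      rw [pscale_comm, (hTf p (hSprime p hp)).1]
    refine ⟨permEnv M, ⟨(M : Type), repMulAction M, ⟨Iso.refl _⟩⟩,
      ConcreteCategory.ofHom (C := Rep ℤ Γ)
        (⟨fl, fun g => ?_⟩ : M.ρ.IntertwiningMap (permEnv M).ρ), epsHom M, ?_⟩
    · refine modcat_hom_ext fun m => ?_
      exact (fl_comm g m).symm
    · apply Rep.hom_ext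
      apply Representation.IntertwiningMap.ext
      refine modcat_hom_ext fun m => ?_
      show epsL M (fl m) = m
      rw [fl_apply]
      have e2 : epsL M (∑ p ∈ S, pscale M (c p) (Tf p m))
          = ∑ p ∈ S, epsL M (pscale M (c p) (Tf p m)) := hom_map_sum _ _ _
      have hstep : ∀ p ∈ S, epsL M (pscale M (c p) (Tf p m)) = msmul M (c p * ind p) m := by
        intro p hp
        rw [eps_pscale, (hTf p (hSprime p hp)).2, msmul_msmul]
      have e7 : ∑ p ∈ S, epsL M (pscale M (c p) (Tf p m)) = ∑ p ∈ S, msmul M (c p * ind p) m :=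
        Finset.sum_congr rfl hstep
      rw [e2, e7, ← msmul_sum, hc, msmul_one]
end
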